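/- The rank of an n×n complex circulant matrix C with first column (c_0, c_1, ..., c_{n-1}) equals n - deg(gcd(f(x), x^n - 1)), where f(x) = c_0 + c_1x + ... + c_{n-1}x^{n-1}. -/

import Mathlib

open Polynomial Matrix Finset

private lemma pow_mod_aux {ζ : ℂ} {n : ℕ} (h1 : ζ ^ n = 1) (a : ℕ) :
    ζ ^ (a % n) = ζ ^ a := by
  conv_rhs => rw [← Nat.mod_add_div a n]
  rw [pow_add, pow_mul, h1, one_pow, mul_one]

private lemma pow_val_add {ζ : ℂ} {n : ℕ} [NeZero n] (h1 : ζ ^ n = 1) (a b : Fin n) :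
    ζ ^ ((a + b : Fin n) : ℕ) = ζ ^ (a : ℕ) * ζ ^ (b : ℕ) := by
  rw [Fin.val_add, pow_mod_aux h1, pow_add]

/-- Degree of gcd with `X^n - 1` counts roots of unity where `f` vanishes. -/
private lemma gcd_side {n : ℕ} (hn : 0 < n) (f : Polynomial ℂ) {ζ : ℂ}
    (hζ : IsPrimitiveRoot ζ n) :
    (EuclideanDomain.gcd f (Polynomial.X ^ n - 1)).natDegree
      = (Finset.univ.filter (fun k : Fin n => f.eval (ζ ^ (k : ℕ)) = 0)).card := by
  classical
  haveI : NeZero n := ⟨hn.ne'⟩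
  have hpinj : Function.Injective (fun k : Fin n => ζ ^ (k : ℕ)) := by
    intro a b hab
    exact Fin.val_injective (hζ.pow_inj a.isLt b.isLt hab)
  -- the product of (X - ζ^k) over all k equals X^n - 1
  have hfull : (Polynomial.X ^ n - 1 : Polynomial ℂ)
      = ∏ k : Fin n, (Polynomial.X - Polynomial.C (ζ ^ (k : ℕ))) := by
    rw [Polynomial.X_pow_sub_one_eq_prod hn hζ]
    refine (Finset.prod_bij (fun (k : Fin n) _ => ζ ^ (k : ℕ)) ?_ ?_ ?_ ?_).symm
    · intro k _
      exact (Polynomial.mem_nthRootsFinset hn (1 : ℂ)).mpr (by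
        rw [← pow_mul, mul_comm, pow_mul, hζ.pow_eq_one, one_pow])
    · intro a _ b _ h
      exact hpinj h
    · intro ξ hξ
      obtain ⟨i, hi, hpow⟩ := hζ.eq_pow_of_pow_eq_one
        ((Polynomial.mem_nthRootsFinset hn (1 : ℂ)).mp hξ)
      exact ⟨⟨i, hi⟩, Finset.mem_univ _, hpow⟩
    · intro k _; rfl
  set S : Finset (Fin n) := Finset.univ.filter (fun k : Fin n => f.eval (ζ ^ (k : ℕ)) = 0)
    with hS
  set g : Polynomial ℂ := ∏ k ∈ S, (Polynomial.X - Polynomial.C (ζ ^ (k : ℕ))) with hg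
  set d : Polynomial ℂ := EuclideanDomain.gcd f (Polynomial.X ^ n - 1) with hd
  have hXn : (Polynomial.X ^ n - 1 : Polynomial ℂ) ≠ 0 := by
    simpa using Polynomial.X_pow_sub_C_ne_zero hn (1 : ℂ)
  -- g divides f
  have hgf : g ∣ f := by
    refine Finset.prod_dvd_of_coprime ?_ ?_
    · intro a ha b hb hab
      exact Polynomial.pairwise_coprime_X_sub_C hpinj hab
    · intro k hk
      rw [Polynomial.dvd_iff_isRoot]
      exact (Finset.mem_filter.mp hk).2
  -- g divides X^n - 1
  have hgX : g ∣ (Polynomial.X ^ n - 1 : Polynomial ℂ) := by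
    rw [hfull]
    exact Finset.prod_dvd_prod_of_subset S Finset.univ _ (Finset.subset_univ S)
  have hgd : g ∣ d := EuclideanDomain.dvd_gcd hgf hgX
  -- d divides g
  have hdg : d ∣ g := by
    have hsplit : (Polynomial.X ^ n - 1 : Polynomial ℂ)
        = g * ∏ k ∈ Finset.univ.filter (fun k : Fin n => ¬ f.eval (ζ ^ (k : ℕ)) = 0),
            (Polynomial.X - Polynomial.C (ζ ^ (k : ℕ))) := by
      rw [hfull, hg, hS, Finset.prod_filter_mul_prod_filter_not]
    have hcop : IsCoprime d
        (∏ k ∈ Finset.univ.filter (fun k : Fin n => ¬ f.eval (ζ ^ (k : ℕ)) = 0),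
            (Polynomial.X - Polynomial.C (ζ ^ (k : ℕ)))) := by
      refine IsCoprime.prod_right ?_
      intro k hk
      have hk' : ¬ f.eval (ζ ^ (k : ℕ)) = 0 := (Finset.mem_filter.mp hk).2
      rw [isCoprime_comm]
      rw [(Polynomial.irreducible_X_sub_C (ζ ^ (k : ℕ))).coprime_iff_not_dvd]
      intro hdvd
      have : (Polynomial.X - Polynomial.C (ζ ^ (k : ℕ))) ∣ f :=
        hdvd.trans (EuclideanDomain.gcd_dvd_left f _)
      exact hk' (Polynomial.dvd_iff_isRoot.mp this)
    have hdX : d ∣ g * ∏ k ∈ Finset.univ.filter (fun k : Fin n => ¬ f.eval (ζ ^ (k : ℕ)) = 0),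
        (Polynomial.X - Polynomial.C (ζ ^ (k : ℕ))) := by
      rw [← hsplit]; exact EuclideanDomain.gcd_dvd_right f _
    exact hcop.dvd_of_dvd_mul_right hdX
  have hg0 : g ≠ 0 := by
    rw [hg]
    exact Finset.prod_ne_zero_iff.mpr (fun k _ => Polynomial.X_sub_C_ne_zero _)
  have hd0 : d ≠ 0 := fun h => hg0 (zero_dvd_iff.mp (h ▸ hdg))
  have hdeg : d.natDegree = g.natDegree :=
    le_antisymm (Polynomial.natDegree_le_of_dvd hdg hg0)
      (Polynomial.natDegree_le_of_dvd hgd hd0)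
  rw [hdeg, hg, Polynomial.natDegree_prod _ _ (fun k _ => Polynomial.X_sub_C_ne_zero _),
    Finset.sum_congr rfl (fun (x : Fin n) _ => Polynomial.natDegree_X_sub_C (ζ ^ (x : ℕ)))]
  simp

theorem stmt17 (n : ℕ) (hn : 0 < n) (c : Fin n → ℂ) :
    (Matrix.circulant c).rank
      = n - (EuclideanDomain.gcd
          (∑ i : Fin n, Polynomial.C (c i) * Polynomial.X ^ (i : ℕ))
          (Polynomial.X ^ n - 1)).natDegree := by
  classical
  haveI : NeZero n := ⟨hn.ne'⟩
  obtain ⟨ζ, hζ⟩ : ∃ ζ : ℂ, IsPrimitiveRoot ζ n :=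
    ⟨_, Complex.isPrimitiveRoot_exp n hn.ne'⟩
  set f : Polynomial ℂ := ∑ i : Fin n, Polynomial.C (c i) * Polynomial.X ^ (i : ℕ) with hf
  have hζ0 : ζ ≠ 0 := hζ.ne_zero hn.ne'
  have hζ1 : ζ ^ n = 1 := hζ.pow_eq_one
  set η : ℂ := ζ⁻¹ with hη
  have hη1 : η ^ n = 1 := by rw [hη, inv_pow, hζ1, inv_one]
  have hηprim : IsPrimitiveRoot η n := hζ.inv
  -- evaluation of f
  have hfeval : ∀ z : ℂ, f.eval z = ∑ m : Fin n, c m * z ^ (m : ℕ) := by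
    intro z
    rw [hf, Polynomial.eval_finset_sum]
    simp
  -- the DFT-type matrix
  set W : Matrix (Fin n) (Fin n) ℂ := Matrix.vandermonde (fun i : Fin n => η ^ (i : ℕ))
    with hW
  have hWdet : IsUnit W.det := by
    rw [hW, isUnit_iff_ne_zero, Matrix.det_vandermonde_ne_zero_iff]
    intro a b hab
    exact Fin.val_injective (hηprim.pow_inj a.isLt b.isLt hab)
  set dvec : Fin n → ℂ := fun k => f.eval (ζ ^ (k : ℕ)) with hdvec
  -- key identity: circulant c * W = W * diagonal dvec
  have key : Matrix.circulant c * W = W * Matrix.diagonal dvec := by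
    ext j k
    rw [Matrix.mul_apply, Matrix.mul_diagonal]
    have hWjk : ∀ i l : Fin n, W i l = η ^ ((i : ℕ) * (l : ℕ)) := by
      intro i l
      rw [hW, Matrix.vandermonde, Matrix.of_apply, ← pow_mul]
    calc ∑ i : Fin n, Matrix.circulant c j i * W i k
        = ∑ m : Fin n, Matrix.circulant c j (j - m) * W (j - m) k := by
          exact (Fintype.sum_equiv (Equiv.subLeft j) _ _ (fun m => rfl)).symm
      _ = ∑ m : Fin n, c m * (η ^ ((j : ℕ) * (k : ℕ)) * ζ ^ ((m : ℕ) * (k : ℕ))) := by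
          refine Finset.sum_congr rfl (fun m _ => ?_)
          rw [Matrix.circulant_apply, sub_sub_cancel, hWjk]
          congr 1
          have hjm : η ^ (((j - m : Fin n) : ℕ)) = η ^ (j : ℕ) * ζ ^ (m : ℕ) := by
            have h1 : η ^ (((j - m : Fin n) : ℕ)) * η ^ (m : ℕ) = η ^ (j : ℕ) := by
              rw [← pow_val_add hη1, sub_add_cancel]
            have hηm : η ^ (m : ℕ) ≠ 0 := pow_ne_zero _ (by
              rw [hη]; exact inv_ne_zero hζ0)
            have hηζ : η ^ (m : ℕ) * ζ ^ (m : ℕ) = 1 := by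
              rw [← mul_pow, hη, inv_mul_cancel₀ hζ0, one_pow]
            rw [← h1, mul_assoc, hηζ, mul_one]
          rw [pow_mul, hjm, mul_pow, ← pow_mul, ← pow_mul]
      _ = η ^ ((j : ℕ) * (k : ℕ)) * ∑ m : Fin n, c m * ζ ^ ((m : ℕ) * (k : ℕ)) := by
          rw [Finset.mul_sum]
          refine Finset.sum_congr rfl (fun m _ => ?_)
          ring
      _ = W j k * dvec k := by
          rw [hWjk]
          congr 1
          rw [show dvec k = f.eval (ζ ^ (k : ℕ)) from rfl, hfeval]
          refine Finset.sum_congr rfl (fun m _ => ?_)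
          rw [← pow_mul, mul_comm (m : ℕ) (k : ℕ)]
  -- rank computation
  have hrank : (Matrix.circulant c).rank
      = (Finset.univ.filter (fun k : Fin n => ¬ f.eval (ζ ^ (k : ℕ)) = 0)).card := by
    calc (Matrix.circulant c).rank
        = (Matrix.circulant c * W).rank :=
          (Matrix.rank_mul_eq_left_of_isUnit_det W (Matrix.circulant c) hWdet).symm
      _ = (W * Matrix.diagonal dvec).rank := by rw [key]
      _ = (Matrix.diagonal dvec).rank :=
          Matrix.rank_mul_eq_right_of_isUnit_det W (Matrix.diagonal dvec) hWdet
      _ = Fintype.card {k : Fin n // dvec k ≠ 0} := Matrix.rank_diagonal dvec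
      _ = (Finset.univ.filter (fun k : Fin n => ¬ f.eval (ζ ^ (k : ℕ)) = 0)).card := by
          rw [Fintype.card_subtype]
  have hgcd := gcd_side hn f hζ
  rw [hrank, hgcd]
  have := Finset.card_filter_add_card_filter_not
    (s := (Finset.univ : Finset (Fin n))) (p := fun k : Fin n => f.eval (ζ ^ (k : ℕ)) = 0)
  simp only [Finset.card_univ, Fintype.card_fin] at this
  omega
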